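/- For every h ∈ H and every h* ∈ H, the target expected error satisfies ε_t(h) ≤ ε_s(h) + (1/2)·d_{HΔH}(P_s, P_t) + ε_s(h*) + ε_t(h*). -/
import Mathlib


open MeasureTheory

/-- For every `h ∈ H` and every `h* ∈ H`,
`ε_t(h) ≤ ε_s(h) + (1/2)·d_{HΔH}(P_s, P_t) + ε_s(h*) + ε_t(h*)`. -/
theorem target_error_bound_pointwise
    {X : Type*} [MeasurableSpace X]
    (Ps Pt : Measure X) [IsProbabilityMeasure Ps] [IsProbabilityMeasure Pt]
    (H : Set (X → Bool)) (hHne : H.Nonempty)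
    (hHmeas : ∀ h ∈ H, Measurable h)
    (fs ft : X → Bool) (hfs : Measurable fs) (hft : Measurable ft)
    (h : X → Bool) (hh : h ∈ H)
    (hstar : X → Bool) (hhstar : hstar ∈ H) :
    (Pt {x | h x ≠ ft x}).toReal ≤
      (Ps {x | h x ≠ fs x}).toReal
      + (1 / 2) * (2 * ⨆ p : H × H,
          |(Ps {x | (p.1 : X → Bool) x ≠ (p.2 : X → Bool) x}).toReal
            - (Pt {x | (p.1 : X → Bool) x ≠ (p.2 : X → Bool) x}).toReal|)
      + (Ps {x | hstar x ≠ fs x}).toReal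
      + (Pt {x | hstar x ≠ ft x}).toReal := by
  set F : H × H → ℝ := fun p =>
      |(Ps {x | (p.1 : X → Bool) x ≠ (p.2 : X → Bool) x}).toReal
        - (Pt {x | (p.1 : X → Bool) x ≠ (p.2 : X → Bool) x}).toReal| with hF
  have hbdd : BddAbove (Set.range F) := by
    refine ⟨2, Set.forall_mem_range.2 fun p => ?_⟩
    have h1 : (Ps {x | (p.1 : X → Bool) x ≠ (p.2 : X → Bool) x}).toReal ≤ 1 := by
      have := prob_le_one (μ := Ps) (s := {x | (p.1 : X → Bool) x ≠ (p.2 : X → Bool) x})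
      simpa using ENNReal.toReal_le_toReal (measure_ne_top _ _) (by simp) |>.2 this
    have h2 : (Pt {x | (p.1 : X → Bool) x ≠ (p.2 : X → Bool) x}).toReal ≤ 1 := by
      have := prob_le_one (μ := Pt) (s := {x | (p.1 : X → Bool) x ≠ (p.2 : X → Bool) x})
      simpa using ENNReal.toReal_le_toReal (measure_ne_top _ _) (by simp) |>.2 this
    have h3 : (0:ℝ) ≤ _ := ENNReal.toReal_nonneg (a := Ps {x | (p.1 : X → Bool) x ≠ (p.2 : X → Bool) x})
    have h4 : (0:ℝ) ≤ _ := ENNReal.toReal_nonneg (a := Pt {x | (p.1 : X → Bool) x ≠ (p.2 : X → Bool) x})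
    rw [hF, abs_le]
    constructor <;> linarith
  have hsup : F (⟨h, hh⟩, ⟨hstar, hhstar⟩) ≤ ⨆ p : H × H, F p :=
    le_ciSup hbdd _
  have key : (Pt {x | h x ≠ hstar x}).toReal ≤
      (Ps {x | h x ≠ hstar x}).toReal + ⨆ p : H × H, F p := by
    have : (Pt {x | h x ≠ hstar x}).toReal - (Ps {x | h x ≠ hstar x}).toReal ≤
        F (⟨h, hh⟩, ⟨hstar, hhstar⟩) := by
      rw [hF]
      exact (neg_le_abs _).trans_eq' (by ring_nf)
    linarith [hsup, this]
  -- subadditivity facts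
  have hA : Pt {x | h x ≠ ft x} ≤ Pt {x | h x ≠ hstar x} + Pt {x | hstar x ≠ ft x} := by
    refine (measure_mono ?_).trans (measure_union_le _ _)
    intro x hx
    by_cases h1 : h x = hstar x
    · right; simp only [Set.mem_setOf_eq] at *; rw [← h1]; exact hx
    · left; exact h1
  have hB : Ps {x | h x ≠ hstar x} ≤ Ps {x | h x ≠ fs x} + Ps {x | hstar x ≠ fs x} := by
    refine (measure_mono ?_).trans (measure_union_le _ _)
    intro x hx
    by_cases h1 : h x = fs x
    · right; simp only [Set.mem_setOf_eq] at *; intro hc; exact hx (h1.trans hc.symm)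
    · left; exact h1
  have hA' : (Pt {x | h x ≠ ft x}).toReal ≤
      (Pt {x | h x ≠ hstar x}).toReal + (Pt {x | hstar x ≠ ft x}).toReal := by
    rw [← ENNReal.toReal_add (measure_ne_top _ _) (measure_ne_top _ _)]
    exact ENNReal.toReal_mono (by finiteness) hA
  have hB' : (Ps {x | h x ≠ hstar x}).toReal ≤
      (Ps {x | h x ≠ fs x}).toReal + (Ps {x | hstar x ≠ fs x}).toReal := by
    rw [← ENNReal.toReal_add (measure_ne_top _ _) (measure_ne_top _ _)]
    exact ENNReal.toReal_mono (by finiteness) hB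
  have : (1:ℝ)/2 * (2 * ⨆ p : H × H, F p) = ⨆ p : H × H, F p := by ring
  rw [this]
  linarith
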